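/- A route (i_1,...,i_K) satisfies the robust capacity constraint Σ_k d_{i_k} ≤ Q for all d in the budgeted uncertainty set with integer budget Γ if and only if u_{i_K, min(Γ,K)} ≤ Q, where u is the worst-case load computed by the dynamic programming recursion. -/

import Mathlib

open Finset

def Msets (k γ : ℕ) : Finset (Finset ℕ) := (Finset.range k).powerset.filter (fun S => S.card ≤ γ)

lemma Msets_ne (k γ : ℕ) : (Msets k γ).Nonempty := ⟨∅, by simp [Msets]⟩

lemma mem_Msets {k γ : ℕ} {S : Finset ℕ} : S ∈ Msets k γ ↔ S ⊆ Finset.range k ∧ S.card ≤ γ := by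
  simp [Msets]

noncomputable def Mv (c : ℕ → ℝ) (k γ : ℕ) : ℝ :=
  (Msets k γ).sup' (Msets_ne k γ) (fun S => ∑ j ∈ S, c j)

lemma le_Mv {c : ℕ → ℝ} {k γ : ℕ} {S : Finset ℕ} (h : S ∈ Msets k γ) :
    ∑ j ∈ S, c j ≤ Mv c k γ :=
  Finset.le_sup' (fun S => ∑ j ∈ S, c j) h

lemma Mv_le {c : ℕ → ℝ} {k γ : ℕ} {x : ℝ}
    (h : ∀ S ∈ Msets k γ, ∑ j ∈ S, c j ≤ x) : Mv c k γ ≤ x :=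
  Finset.sup'_le _ _ h

lemma empty_mem_Msets (k γ : ℕ) : (∅ : Finset ℕ) ∈ Msets k γ :=
  mem_Msets.mpr ⟨Finset.empty_subset _, by simp⟩

lemma Mv_zero (c : ℕ → ℝ) (γ : ℕ) : Mv c 0 γ = 0 := by
  apply le_antisymm
  · apply Mv_le
    intro S hS
    rw [mem_Msets] at hS
    have : S = ∅ := Finset.subset_empty.mp (by simpa using hS.1)
    simp [this]
  · simpa using le_Mv (empty_mem_Msets 0 γ)

lemma Mv_zero' (c : ℕ → ℝ) (k : ℕ) : Mv c k 0 = 0 := by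
  apply le_antisymm
  · apply Mv_le
    intro S hS
    rw [mem_Msets] at hS
    have : S = ∅ := Finset.card_eq_zero.mp (Nat.le_zero.mp hS.2)
    simp [this]
  · simpa using le_Mv (empty_mem_Msets k 0)

lemma Mv_rec (c : ℕ → ℝ) (k γ : ℕ) :
    Mv c (k + 1) (γ + 1) = max (Mv c k (γ + 1)) (Mv c k γ + c k) := by
  apply le_antisymm
  · apply Mv_le
    intro S hS
    rw [mem_Msets] at hS
    by_cases hk : k ∈ S
    · refine le_max_of_le_right ?_
      have hknotin : k ∉ S.erase k := Finset.notMem_erase _ _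
      have hsum : ∑ j ∈ S, c j = (∑ j ∈ S.erase k, c j) + c k := by
        conv_lhs => rw [← Finset.insert_erase hk]
        rw [Finset.sum_insert hknotin]; ring
      rw [hsum]
      apply add_le_add_left
      apply le_Mv
      rw [mem_Msets]
      constructor
      · intro x hx
        have hx' := hS.1 (Finset.mem_of_mem_erase hx)
        have : x ≠ k := Finset.ne_of_mem_erase hx
        rw [Finset.mem_range] at hx' ⊢
        omega
      · have := Finset.card_erase_of_mem hk
        omega
    · refine le_max_of_le_left ?_
      apply le_Mv
      rw [mem_Msets]
      constructor
      · intro x hx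
        have hx' := hS.1 hx
        rw [Finset.mem_range] at hx' ⊢
        have : x ≠ k := fun h => hk (h ▸ hx)
        omega
      · exact hS.2
  · apply max_le
    · apply Mv_le
      intro S hS
      rw [mem_Msets] at hS
      apply le_Mv
      rw [mem_Msets]
      exact ⟨hS.1.trans (Finset.range_subset_range.mpr (Nat.le_succ k)), hS.2⟩
    · obtain ⟨S, hS, hEq⟩ := Finset.exists_mem_eq_sup' (Msets_ne k γ) (fun S => ∑ j ∈ S, c j)
      rw [mem_Msets] at hS
      have hknotin : k ∉ S := fun h => by
        have := hS.1 h; rw [Finset.mem_range] at this; omega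
      have heq2 : Mv c k γ + c k = ∑ j ∈ insert k S, c j := by
        rw [Finset.sum_insert hknotin, Mv, hEq]; ring
      rw [heq2]
      apply le_Mv
      rw [mem_Msets]
      constructor
      · intro x hx
        rcases Finset.mem_insert.mp hx with h | h
        · simp [h]
        · exact Finset.range_subset_range.mpr (Nat.le_succ k) (hS.1 h)
      · rw [Finset.card_insert_of_notMem hknotin]; omega

lemma exists_top (c : ℕ → ℝ) : ∀ (m : ℕ) (T : Finset ℕ), m ≤ T.card →
    ∃ S ⊆ T, S.card = m ∧ ∀ a ∈ S, ∀ b ∈ T, b ∉ S → c b ≤ c a := by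
  intro m
  induction m with
  | zero => exact fun T _ => ⟨∅, Finset.empty_subset _, rfl, by simp⟩
  | succ m ih =>
    intro T hm
    have hTne : T.Nonempty := Finset.card_pos.mp (by omega)
    obtain ⟨a, haT, hamax⟩ := Finset.exists_max_image T c hTne
    have hcard : m ≤ (T.erase a).card := by
      rw [Finset.card_erase_of_mem haT]; omega
    obtain ⟨S', hS'sub, hS'card, hS'max⟩ := ih (T.erase a) hcard
    have haS' : a ∉ S' := fun h => Finset.notMem_erase a T (hS'sub h)
    refine ⟨insert a S', ?_, ?_, ?_⟩
    · intro x hx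
      rcases Finset.mem_insert.mp hx with h | h
      · exact h ▸ haT
      · exact Finset.mem_of_mem_erase (hS'sub h)
    · rw [Finset.card_insert_of_notMem haS', hS'card]
    · intro x hx b hbT hbS
      rcases Finset.mem_insert.mp hx with h | h
      · exact h ▸ hamax b hbT
      · have hba : b ≠ a := fun hba => hbS (hba ▸ Finset.mem_insert_self a S')
        exact hS'max x h b (Finset.mem_erase.mpr ⟨hba, hbT⟩)
          (fun hb => hbS (Finset.mem_insert_of_mem hb))

lemma frac_le (c η : ℕ → ℝ) (K Γ : ℕ) (hc : ∀ j ∈ Finset.range K, 0 ≤ c j)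
    (hη0 : ∀ j ∈ Finset.range K, 0 ≤ η j) (hη1 : ∀ j ∈ Finset.range K, η j ≤ 1)
    (hsum : ∑ j ∈ Finset.range K, η j ≤ (Γ : ℝ)) :
    ∑ j ∈ Finset.range K, η j * c j ≤ Mv c K (min Γ K) := by
  set T := Finset.range K with hT
  rcases le_total K Γ with hKΓ | hΓK
  · -- min Γ K = K, take S = T, termwise bound
    have hmin : min Γ K = K := min_eq_right hKΓ
    rw [hmin]
    have hTmem : T ∈ Msets K K := mem_Msets.mpr ⟨le_refl _, by simp [hT]⟩
    calc ∑ j ∈ T, η j * c j ≤ ∑ j ∈ T, c j := by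
          apply Finset.sum_le_sum
          intro j hj
          nlinarith [hc j hj, hη0 j hj, hη1 j hj]
      _ ≤ Mv c K K := le_Mv hTmem
  · -- min Γ K = Γ
    have hmin : min Γ K = Γ := min_eq_left hΓK
    rw [hmin]
    rcases Nat.eq_zero_or_pos Γ with hΓ0 | hΓpos
    · subst hΓ0
      have hz : ∀ j ∈ T, η j = 0 := by
        intro j hj
        have h1 : ∑ j ∈ T, η j ≤ 0 := by simpa using hsum
        have h2 : ∑ j ∈ T, η j = 0 := le_antisymm h1 (Finset.sum_nonneg hη0)
        exact (Finset.sum_eq_zero_iff_of_nonneg hη0).mp h2 j hj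
      have : ∑ j ∈ T, η j * c j = 0 := Finset.sum_eq_zero (fun j hj => by rw [hz j hj, zero_mul])
      rw [this]
      simpa using le_Mv (c := c) (empty_mem_Msets K 0)
    · obtain ⟨S, hSsub, hScard, hStop⟩ := exists_top c Γ T (by simp [hT, hΓK])
      have hSne : S.Nonempty := Finset.card_pos.mp (by omega)
      obtain ⟨a₀, ha₀S, ha₀min⟩ := Finset.exists_min_image S c hSne
      set t := c a₀ with ht
      have ht0 : 0 ≤ t := hc a₀ (hSsub ha₀S)
      -- sum split
      have hsplit : ∑ j ∈ T, η j * c j = (∑ j ∈ S, η j * c j) + ∑ j ∈ T \ S, η j * c j := by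
        rw [add_comm, Finset.sum_sdiff hSsub]
      -- bound on complement part
      have hb1 : ∑ j ∈ T \ S, η j * c j ≤ (∑ j ∈ T \ S, η j) * t := by
        rw [Finset.sum_mul]
        apply Finset.sum_le_sum
        intro j hj
        have hjT := Finset.mem_sdiff.mp hj
        have hct : c j ≤ t := hStop a₀ ha₀S j hjT.1 hjT.2
        exact mul_le_mul_of_nonneg_left hct (hη0 j hjT.1)
      have hb2 : ∑ j ∈ T \ S, η j ≤ ∑ j ∈ S, (1 - η j) := by
        have h1 : (∑ j ∈ S, η j) + ∑ j ∈ T \ S, η j ≤ (Γ : ℝ) := by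
          rw [add_comm, Finset.sum_sdiff hSsub]; exact hsum
        have h2 : ∑ j ∈ S, (1 - η j) = (Γ : ℝ) - ∑ j ∈ S, η j := by
          rw [Finset.sum_sub_distrib, Finset.sum_const, hScard]; simp
        linarith
      have hb3 : (∑ j ∈ S, (1 - η j)) * t ≤ ∑ j ∈ S, (1 - η j) * c j := by
        rw [Finset.sum_mul]
        apply Finset.sum_le_sum
        intro j hj
        have h1 : 0 ≤ 1 - η j := by linarith [hη1 j (hSsub hj)]
        exact mul_le_mul_of_nonneg_left (ha₀min j hj) h1
      have hfin : ∑ j ∈ T, η j * c j ≤ ∑ j ∈ S, c j := by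
        have : (∑ j ∈ S, η j * c j) + ∑ j ∈ S, (1 - η j) * c j = ∑ j ∈ S, c j := by
          rw [← Finset.sum_add_distrib]
          apply Finset.sum_congr rfl
          intro j _; ring
        nlinarith [mul_le_mul_of_nonneg_right hb2 ht0]
      exact hfin.trans (le_Mv (mem_Msets.mpr ⟨hSsub, le_of_eq hScard⟩))

theorem robust_feasibility_iff_dp (n : ℕ) (db dh : Fin n → ℝ)
    (hdh : ∀ i, 0 ≤ dh i) (Γ : ℕ) (Q : ℝ)
    (D : Set (Fin n → ℝ))
    (hD : D = {d | ∃ ξ : Fin n → ℝ, (∀ i, ξ i ∈ Set.Icc (0:ℝ) 1) ∧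
        (∑ i, ξ i ≤ (Γ : ℝ)) ∧ ∀ i, d i = db i + ξ i * dh i})
    (K : ℕ) (r : Fin K → Fin n) (hr : Function.Injective r)
    (u : ℕ → ℕ → ℝ)
    (h0 : ∀ γ, u 0 γ = 0)
    (hrec0 : ∀ k : Fin K, u ((k : ℕ) + 1) 0 = u (k : ℕ) 0 + db (r k))
    (hrec : ∀ (k : Fin K) (γ : ℕ), u ((k : ℕ) + 1) (γ + 1) =
      max (u (k : ℕ) (γ + 1) + db (r k)) (u (k : ℕ) γ + db (r k) + dh (r k))) :
    (∀ d ∈ D, ∑ k, d (r k) ≤ Q) ↔ u K (min Γ K) ≤ Q := by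
  subst hD
  set c : ℕ → ℝ := fun j => if h : j < K then dh (r ⟨j, h⟩) else 0 with hcdef
  set b : ℕ → ℝ := fun j => if h : j < K then db (r ⟨j, h⟩) else 0 with hbdef
  have hck : ∀ (k : Fin K), c (k : ℕ) = dh (r k) := by
    intro k; simp only [hcdef]; rw [dif_pos k.isLt]
  have hbk : ∀ (k : Fin K), b (k : ℕ) = db (r k) := by
    intro k; simp only [hbdef]; rw [dif_pos k.isLt]
  -- the DP value identity
  have hu : ∀ k, k ≤ K → ∀ γ, u k γ = (∑ j ∈ Finset.range k, b j) + Mv c k γ := by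
    intro k
    induction k with
    | zero => intro _ γ; rw [h0, Mv_zero]; simp
    | succ k ih =>
      intro hkK γ
      have hkK' : k < K := by omega
      set kf : Fin K := ⟨k, hkK'⟩ with hkf
      have hkv : (kf : ℕ) = k := rfl
      cases γ with
      | zero =>
        have h := hrec0 kf
        rw [hkv] at h
        rw [h, ih (by omega) 0, Mv_zero', Mv_zero', Finset.sum_range_succ, hbk kf]
        ring
      | succ γ =>
        have h := hrec kf γ
        rw [hkv] at h
        rw [h, ih (by omega) (γ + 1), ih (by omega) γ, Finset.sum_range_succ, Mv_rec,
          ← max_add_add_left]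
        congr 1
        · rw [hbk kf]; ring
        · rw [hbk kf, hck kf]; ring
  have huK := hu K le_rfl (min Γ K)
  -- sum of base demands over the route
  have hbsum : ∑ k : Fin K, db (r k) = ∑ j ∈ Finset.range K, b j := by
    rw [← Fin.sum_univ_eq_sum_range]
    exact Finset.sum_congr rfl (fun k _ => (hbk k).symm)
  constructor
  · -- robust feasibility → DP bound
    intro hAll
    obtain ⟨S, hSmem, hEq⟩ := Finset.exists_mem_eq_sup' (Msets_ne K (min Γ K))
      (fun S => ∑ j ∈ S, c j)
    have hMvS : Mv c K (min Γ K) = ∑ j ∈ S, c j := hEq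
    rw [mem_Msets] at hSmem
    set T : Finset (Fin K) := Finset.univ.filter (fun k => (k : ℕ) ∈ S) with hTdef
    set ξ : Fin n → ℝ := fun i => if i ∈ T.image r then 1 else 0 with hξdef
    have hξ01 : ∀ i, ξ i ∈ Set.Icc (0:ℝ) 1 := by
      intro i; simp only [hξdef]; split <;> norm_num
    have hTS : T.image Fin.val = S := by
      ext j
      simp only [Finset.mem_image, hTdef, Finset.mem_filter, Finset.mem_univ, true_and]
      constructor
      · rintro ⟨a, ha, rfl⟩; exact ha
      · intro hj
        have hjK : j < K := Finset.mem_range.mp (hSmem.1 hj)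
        exact ⟨⟨j, hjK⟩, hj, rfl⟩
    have hcardT : T.card = S.card := by
      rw [← hTS]; exact (Finset.card_image_of_injective T Fin.val_injective).symm
    have hξr : ∀ k : Fin K, ξ (r k) = if k ∈ T then 1 else 0 := by
      intro k
      have hmem : r k ∈ T.image r ↔ k ∈ T := by
        constructor
        · intro h; obtain ⟨a, ha, hak⟩ := Finset.mem_image.mp h; rwa [← hr hak]
        · intro h; exact Finset.mem_image_of_mem r h
      simp only [hξdef, hmem]
    have hsumξ : ∑ i, ξ i ≤ (Γ : ℝ) := by
      have h1 : ∑ i, ξ i = ((T.image r).card : ℝ) := by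
        simp only [hξdef]
        rw [Finset.sum_boole, Finset.filter_mem_eq_inter, Finset.univ_inter]
      rw [h1, Finset.card_image_of_injective T hr, hcardT]
      exact_mod_cast hSmem.2.trans (min_le_left Γ K)
    set d : Fin n → ℝ := fun i => db i + ξ i * dh i with hddef
    have hdD : d ∈ {d | ∃ ξ : Fin n → ℝ, (∀ i, ξ i ∈ Set.Icc (0:ℝ) 1) ∧
        (∑ i, ξ i ≤ (Γ : ℝ)) ∧ ∀ i, d i = db i + ξ i * dh i} :=
      ⟨ξ, hξ01, hsumξ, fun i => rfl⟩
    have hval : ∑ k, d (r k) = u K (min Γ K) := by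
      have h2 : ∑ k, d (r k) = (∑ k : Fin K, db (r k)) + ∑ k : Fin K, ξ (r k) * dh (r k) := by
        simp only [hddef]; rw [Finset.sum_add_distrib]
      have h3 : ∑ k : Fin K, ξ (r k) * dh (r k) = ∑ j ∈ S, c j := by
        have e1 : ∑ k : Fin K, ξ (r k) * dh (r k)
            = ∑ k : Fin K, (if k ∈ T then dh (r k) else 0) := by
          apply Finset.sum_congr rfl
          intro k _
          rw [hξr k]
          split <;> simp
        have e2 : ∑ k : Fin K, (if k ∈ T then dh (r k) else 0) = ∑ k ∈ T, dh (r k) := by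
          rw [hTdef, Finset.sum_filter]
          exact Finset.sum_congr rfl (fun k _ => by simp)
        have e3 : ∑ k ∈ T, dh (r k) = ∑ k ∈ T, c (k : ℕ) :=
          Finset.sum_congr rfl (fun k _ => (hck k).symm)
        have e4 : ∑ k ∈ T, c (k : ℕ) = ∑ j ∈ S, c j := by
          rw [← hTS]
          exact (Finset.sum_image (fun x _ y _ h => Fin.val_injective h)).symm
        rw [e1, e2, e3, e4]
      rw [h2, h3, hbsum, huK, hMvS]
    rw [← hval]
    exact hAll d hdD
  · -- DP bound → robust feasibility
    intro hQ d hd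
    obtain ⟨ξ, hξ01, hξsum, hdi⟩ := hd
    set η : ℕ → ℝ := fun j => if h : j < K then ξ (r ⟨j, h⟩) else 0 with hηdef
    have hηk : ∀ (k : Fin K), η (k : ℕ) = ξ (r k) := by
      intro k; simp only [hηdef]; rw [dif_pos k.isLt]
    have hcnn : ∀ j ∈ Finset.range K, 0 ≤ c j := by
      intro j hj
      simp only [hcdef]
      split
      · exact hdh _
      · exact le_refl 0
    have hη0 : ∀ j ∈ Finset.range K, 0 ≤ η j := by
      intro j _
      simp only [hηdef]
      split
      · exact (hξ01 _).1
      · exact le_refl 0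
    have hη1 : ∀ j ∈ Finset.range K, η j ≤ 1 := by
      intro j _
      simp only [hηdef]
      split
      · exact (hξ01 _).2
      · exact zero_le_one
    have hηsum : ∑ j ∈ Finset.range K, η j ≤ (Γ : ℝ) := by
      have e1 : ∑ j ∈ Finset.range K, η j = ∑ k : Fin K, ξ (r k) := by
        rw [← Fin.sum_univ_eq_sum_range]
        exact Finset.sum_congr rfl (fun k _ => hηk k)
      have e2 : ∑ k : Fin K, ξ (r k) = ∑ i ∈ Finset.univ.image r, ξ i :=
        (Finset.sum_image (fun x _ y _ h => hr h)).symm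
      have e3 : ∑ i ∈ Finset.univ.image r, ξ i ≤ ∑ i, ξ i :=
        Finset.sum_le_sum_of_subset_of_nonneg (Finset.subset_univ _)
          (fun i _ _ => (hξ01 i).1)
      rw [e1, e2]; exact e3.trans hξsum
    have hfrac := frac_le c η K Γ hcnn hη0 hη1 hηsum
    have hdval : ∑ k, d (r k)
        = (∑ j ∈ Finset.range K, b j) + ∑ j ∈ Finset.range K, η j * c j := by
      have e1 : ∑ k : Fin K, d (r k) = ∑ k : Fin K, (db (r k) + ξ (r k) * dh (r k)) :=
        Finset.sum_congr rfl (fun k _ => by rw [hdi (r k)])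
      have e2 : ∑ j ∈ Finset.range K, η j * c j = ∑ k : Fin K, ξ (r k) * dh (r k) := by
        rw [← Fin.sum_univ_eq_sum_range]
        exact Finset.sum_congr rfl (fun k _ => by rw [hηk k, hck k])
      rw [e1, Finset.sum_add_distrib, hbsum, e2]
    rw [hdval]
    rw [huK] at hQ
    linarith
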